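/- Fix positive integers m, n, s and p_1,…,p_s, a real δ ∈ (0,1), a utility vector w ∈ ℝ^m with w_i ≥ 0, and for each k ∈ {1,…,s} vectors L^{(k)}, U^{(k)} ∈ ℝ^{p_k} with nonnegative entries and a matrix q^{(k)} ∈ [0,1]^{m×p_k} whose rows sum to 1. Let (g^{(1)},…,g^{(s)}) be random assignments with all m·s labels g^{(k)}(i) mutually independent and Pr[g^{(k)}(i) = ℓ] = q^{(k)}_{iℓ}, and set p̄ := max_k p_k and r := 1 + ∑_{k=1}^s (p_k − 1). Let P := {x ∈ [0,1]^m : ∑_i x_i = n, and for all k, ℓ, L^{(k)}_ℓ − δn ≤ ∑_i q^{(k)}_{iℓ} x_i ≤ U^{(k)}_ℓ + δn}, suppose x ∈ P maximizes y ↦ ∑_i w_i y_i over P and has at most r fractional coordinates, and set x'_i := ⌈x_i⌉ ∈ {0,1}. Then n ≤ ∑_i x'_i ≤ n + r, and for every fixed x* ∈ {0,1}^m with ∑_i x*_i = n, with probability at least 1 − 4·p̄·s·exp(−δ²n/3), the following both hold: (i) if for all k and all ℓ ∈ {1,…,p_k}, L^{(k)}_ℓ ≤ #{i : x*_i = 1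 and g^{(k)}(i) = ℓ} ≤ U^{(k)}_ℓ, then ∑_i w_i x'_i ≥ ∑_i w_i x*_i; and (ii) for all k and all ℓ ∈ {1,…,p_k}, L^{(k)}_ℓ − (r + 2δn) ≤ #{i : x'_i = 1 and g^{(k)}(i) = ℓ} ≤ U^{(k)}_ℓ + (r + 2δn). -/

import Mathlib

open MeasureTheory
open Real ProbabilityTheory
open scoped ENNReal NNReal


section TgtAux

lemma tgt_exp_quad {x : ℝ} (h1 : 0 ≤ x) (h2 : x ≤ 1) : exp x ≤ 1 + x + (3/4)*x^2 := by
  have h := Real.exp_bound' h1 h2 (n := 2) (by norm_num)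
  simp only [Finset.sum_range_succ, Finset.sum_range_zero, Nat.factorial] at h
  norm_num at h
  nlinarith [h]

lemma tgt_exp_quad_neg {x : ℝ} (h1 : 0 ≤ x) (h2 : x ≤ 1) : exp (-x) ≤ 1 - x + (3/4)*x^2 := by
  have habs : |(-x)| ≤ 1 := by rw [abs_neg, abs_of_nonneg h1]; exact h2
  have h := Real.exp_bound habs (n := 2) (by norm_num)
  simp only [Finset.sum_range_succ, Finset.sum_range_zero, Nat.factorial] at h
  rw [abs_neg, abs_of_nonneg h1] at h
  norm_num at h
  have := (abs_sub_le_iff.1 h).1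
  nlinarith [this]

lemma tgt_mgf {m pk : ℕ} (νk : Fin m → Measure (Fin pk))
    [∀ i, IsProbabilityMeasure (νk i)] (qk : Fin m → Fin pk → ℝ)
    (hq01 : ∀ i ℓ, qk i ℓ ∈ Set.Icc (0:ℝ) 1)
    (hqsum : ∀ i, ∑ ℓ, qk i ℓ = 1)
    (hνq : ∀ i ℓ, νk i {ℓ} = ENNReal.ofReal (qk i ℓ))
    (S : Finset (Fin m)) (ℓ : Fin pk) (t : ℝ) :
    ∫ y : Fin m → Fin pk, exp (t * ∑ i ∈ S, (if y i = ℓ then (1:ℝ) else 0))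
        ∂(Measure.pi νk)
      ≤ exp ((exp t - 1) * ∑ i ∈ S, qk i ℓ) := by
  classical
  have hfac : ∀ y : Fin m → Fin pk,
      exp (t * ∑ i ∈ S, (if y i = ℓ then (1:ℝ) else 0))
      = ∏ i : Fin m, (if i ∈ S then exp (t * (if y i = ℓ then (1:ℝ) else 0)) else 1) := by
    intro y
    rw [Finset.mul_sum, Real.exp_sum]
    rw [Finset.prod_ite_mem Finset.univ S fun i => exp (t * (if y i = ℓ then (1:ℝ) else 0))]
    rw [Finset.univ_inter]
  simp_rw [hfac]
  letI : ∀ _ : Fin m, MeasureSpace (Fin pk) := fun i => ⟨νk i⟩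
  have hprod := MeasureTheory.integral_fintype_prod_eq_prod (𝕜 := ℝ) (ι := Fin m) (E := fun _ => Fin pk)
    (fun i a => (if i ∈ S then exp (t * (if a = ℓ then (1:ℝ) else 0)) else 1))
    (μ := νk)
  have hvol : (volume : Measure (Fin m → Fin pk)) = Measure.pi νk := rfl
  rw [hprod]
  have hfact : ∀ i : Fin m,
      (∫ a : Fin pk, (if i ∈ S then exp (t * (if a = ℓ then (1:ℝ) else 0)) else 1) ∂(νk i))
      = if i ∈ S then 1 + qk i ℓ * (exp t - 1) else 1 := by
    intro i
    by_cases hiS : i ∈ S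
    · simp only [hiS, if_true]
      rw [integral_fintype (Integrable.of_finite)]; simp only [Measure.real_def]
      have htr : ∀ a : Fin pk, (νk i {a}).toReal = qk i a := by
        intro a; rw [hνq i a, ENNReal.toReal_ofReal (hq01 i a).1]
      simp_rw [htr, smul_eq_mul]
      rw [Finset.sum_eq_add_sum_sdiff_singleton_of_mem (Finset.mem_univ ℓ)]
      have h2 : ∀ a ∈ Finset.univ \ {ℓ}, qk i a * exp (t * (if a = ℓ then (1:ℝ) else 0))
          = qk i a := by
        intro a ha
        rw [Finset.mem_sdiff, Finset.mem_singleton] at ha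
        simp [ha.2]
      rw [Finset.sum_congr rfl h2]
      have h3 : ∑ a ∈ Finset.univ \ {ℓ}, qk i a = 1 - qk i ℓ := by
        have := Finset.sum_eq_add_sum_sdiff_singleton_of_mem (Finset.mem_univ ℓ) (qk i)
        rw [hqsum i] at this; linarith
      rw [h3]
      simp only [if_true, eq_self_iff_true, mul_one]
      ring
    · simp [hiS]
  simp_rw [hfact]
  calc ∏ i : Fin m, (if i ∈ S then 1 + qk i ℓ * (exp t - 1) else 1)
      ≤ ∏ i : Fin m, (if i ∈ S then exp (qk i ℓ * (exp t - 1)) else 1) := by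
        apply Finset.prod_le_prod
        · intro i _
          by_cases hiS : i ∈ S
          · simp only [hiS, if_true]
            nlinarith [exp_pos t, (hq01 i ℓ).1, (hq01 i ℓ).2]
          · simp [hiS]
        · intro i _
          by_cases hiS : i ∈ S
          · simp only [hiS, if_true]
            have := Real.add_one_le_exp (qk i ℓ * (exp t - 1)); linarith
          · simp [hiS]
    _ = exp ((exp t - 1) * ∑ i ∈ S, qk i ℓ) := by
        rw [Finset.prod_ite_mem, Finset.univ_inter, ← Real.exp_sum, Finset.mul_sum]
        congr 1
        exact Finset.sum_congr rfl fun i _ => by ring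

lemma tgt_upper {m pk n : ℕ} {δ : ℝ} (hδ : δ ∈ Set.Ioo (0:ℝ) 1)
    (νk : Fin m → Measure (Fin pk))
    [∀ i, IsProbabilityMeasure (νk i)] (qk : Fin m → Fin pk → ℝ)
    (hq01 : ∀ i ℓ, qk i ℓ ∈ Set.Icc (0:ℝ) 1)
    (hqsum : ∀ i, ∑ ℓ, qk i ℓ = 1)
    (hνq : ∀ i ℓ, νk i {ℓ} = ENNReal.ofReal (qk i ℓ))
    (S : Finset (Fin m)) (hS : S.card ≤ n) (ℓ : Fin pk) :
    Measure.pi νk {y | (∑ i ∈ S, qk i ℓ) + δ*n ≤ ∑ i ∈ S, (if y i = ℓ then (1:ℝ) else 0)}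
      ≤ ENNReal.ofReal (exp (-(δ^2*n)/3)) := by
  classical
  obtain ⟨hδ0, hδ1⟩ := hδ
  set t : ℝ := 2*δ/3 with ht_def
  have ht0 : 0 ≤ t := by positivity
  have ht1 : t ≤ 1 := by rw [ht_def]; linarith
  set X : (Fin m → Fin pk) → ℝ := fun y => ∑ i ∈ S, (if y i = ℓ then (1:ℝ) else 0) with hX
  set μS : ℝ := ∑ i ∈ S, qk i ℓ with hμS
  have hint : Integrable (fun y => exp (t * X y)) (Measure.pi νk) := .of_finite
  have hcher := measure_ge_le_exp_mul_mgf (X := X) (μ := Measure.pi νk) (μS + δ*n) ht0 hint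
  have hmgf : mgf X (Measure.pi νk) t ≤ exp ((exp t - 1) * μS) :=
    tgt_mgf νk qk hq01 hqsum hνq S ℓ t
  have hμS0 : 0 ≤ μS := Finset.sum_nonneg fun i _ => (hq01 i ℓ).1
  have hμSn : μS ≤ (n:ℝ) := by
    calc μS ≤ ∑ _i ∈ S, (1:ℝ) := Finset.sum_le_sum fun i _ => (hq01 i ℓ).2
    _ = S.card := by simp
    _ ≤ (n:ℝ) := by exact_mod_cast hS
  have hrhs : exp (-t * (μS + δ*n)) * exp ((exp t - 1) * μS) ≤ exp (-(δ^2*n)/3) := by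
    rw [← Real.exp_add, Real.exp_le_exp]
    have he1 : exp t ≤ 1 + t + (3/4)*t^2 := tgt_exp_quad ht0 ht1
    have he2 : t + 1 ≤ exp t := Real.add_one_le_exp t
    have hn0 : (0:ℝ) ≤ (n:ℝ) := Nat.cast_nonneg n
    have hc0 : 0 ≤ exp t - 1 - t := by linarith
    have hc1 : exp t - 1 - t ≤ (3/4)*t^2 := by linarith
    have key : (exp t - 1 - t) * μS ≤ (3/4)*t^2 * (n:ℝ) :=
      le_trans (mul_le_mul_of_nonneg_left hμSn hc0)
        (mul_le_mul_of_nonneg_right hc1 hn0)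
    have key2 : (3/4)*t^2*(n:ℝ) - t*δ*(n:ℝ) = -(δ^2*(n:ℝ))/3 := by rw [ht_def]; ring
    nlinarith [key, key2]
  have hmono : exp (-t * (μS + δ*n)) * mgf X (Measure.pi νk) t ≤ exp (-(δ^2*n)/3) :=
    le_trans (mul_le_mul_of_nonneg_left hmgf (le_of_lt (exp_pos _))) hrhs
  have hfin : (Measure.pi νk) {y | μS + δ*n ≤ X y} ≠ ⊤ := measure_ne_top _ _
  have := hcher.trans hmono
  calc (Measure.pi νk) {y | μS + δ*n ≤ X y}
      = ENNReal.ofReal ((Measure.pi νk) {y | μS + δ*n ≤ X y}).toReal :=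
        (ENNReal.ofReal_toReal hfin).symm
    _ ≤ ENNReal.ofReal (exp (-(δ^2*n)/3)) := ENNReal.ofReal_le_ofReal this

lemma tgt_lower {m pk n : ℕ} {δ : ℝ} (hδ : δ ∈ Set.Ioo (0:ℝ) 1)
    (νk : Fin m → Measure (Fin pk))
    [∀ i, IsProbabilityMeasure (νk i)] (qk : Fin m → Fin pk → ℝ)
    (hq01 : ∀ i ℓ, qk i ℓ ∈ Set.Icc (0:ℝ) 1)
    (hqsum : ∀ i, ∑ ℓ, qk i ℓ = 1)
    (hνq : ∀ i ℓ, νk i {ℓ} = ENNReal.ofReal (qk i ℓ))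
    (S : Finset (Fin m)) (hS : S.card ≤ n) (ℓ : Fin pk) :
    Measure.pi νk {y | ∑ i ∈ S, (if y i = ℓ then (1:ℝ) else 0) ≤ (∑ i ∈ S, qk i ℓ) - δ*n}
      ≤ ENNReal.ofReal (exp (-(δ^2*n)/3)) := by
  classical
  obtain ⟨hδ0, hδ1⟩ := hδ
  set u : ℝ := 2*δ/3 with hu_def
  have hu0 : 0 ≤ u := by positivity
  have hu1 : u ≤ 1 := by rw [hu_def]; linarith
  set X : (Fin m → Fin pk) → ℝ := fun y => ∑ i ∈ S, (if y i = ℓ then (1:ℝ) else 0) with hX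
  set μS : ℝ := ∑ i ∈ S, qk i ℓ with hμS
  have hint : Integrable (fun y => exp ((-u) * X y)) (Measure.pi νk) := .of_finite
  have hcher := measure_le_le_exp_mul_mgf (X := X) (μ := Measure.pi νk) (μS - δ*n)
    (neg_nonpos.mpr hu0) hint
  have hmgf : mgf X (Measure.pi νk) (-u) ≤ exp ((exp (-u) - 1) * μS) :=
    tgt_mgf νk qk hq01 hqsum hνq S ℓ (-u)
  have hμS0 : 0 ≤ μS := Finset.sum_nonneg fun i _ => (hq01 i ℓ).1
  have hμSn : μS ≤ (n:ℝ) := by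
    calc μS ≤ ∑ _i ∈ S, (1:ℝ) := Finset.sum_le_sum fun i _ => (hq01 i ℓ).2
    _ = S.card := by simp
    _ ≤ (n:ℝ) := by exact_mod_cast hS
  have hrhs : exp (-(-u) * (μS - δ*n)) * exp ((exp (-u) - 1) * μS) ≤ exp (-(δ^2*n)/3) := by
    rw [← Real.exp_add, Real.exp_le_exp]
    have he1 : exp (-u) ≤ 1 - u + (3/4)*u^2 := tgt_exp_quad_neg hu0 hu1
    have he2 : (-u) + 1 ≤ exp (-u) := Real.add_one_le_exp (-u)
    have hn0 : (0:ℝ) ≤ (n:ℝ) := Nat.cast_nonneg n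
    have hc0 : 0 ≤ exp (-u) - 1 + u := by linarith
    have hc1 : exp (-u) - 1 + u ≤ (3/4)*u^2 := by linarith
    have key : (exp (-u) - 1 + u) * μS ≤ (3/4)*u^2 * (n:ℝ) :=
      le_trans (mul_le_mul_of_nonneg_left hμSn hc0)
        (mul_le_mul_of_nonneg_right hc1 hn0)
    have key2 : (3/4)*u^2*(n:ℝ) - u*δ*(n:ℝ) = -(δ^2*(n:ℝ))/3 := by rw [hu_def]; ring
    nlinarith [key, key2]
  have hmono : exp (-(-u) * (μS - δ*n)) * mgf X (Measure.pi νk) (-u) ≤ exp (-(δ^2*n)/3) :=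
    le_trans (mul_le_mul_of_nonneg_left hmgf (le_of_lt (exp_pos _))) hrhs
  have hfin : (Measure.pi νk) {y | X y ≤ μS - δ*n} ≠ ⊤ := measure_ne_top _ _
  have := hcher.trans hmono
  calc (Measure.pi νk) {y | X y ≤ μS - δ*n}
      = ENNReal.ofReal ((Measure.pi νk) {y | X y ≤ μS - δ*n}).toReal :=
        (ENNReal.ofReal_toReal hfin).symm
    _ ≤ ENNReal.ofReal (exp (-(δ^2*n)/3)) := ENNReal.ofReal_le_ofReal this

lemma tgt_eval {s : ℕ} {α : Fin s → Type*} [∀ k, MeasurableSpace (α k)]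
    (M : ∀ k, Measure (α k)) [∀ k, IsProbabilityMeasure (M k)]
    (k : Fin s) (A : Set (α k)) :
    Measure.pi M (Function.eval k ⁻¹' A) = M k A := by
  classical
  rw [Set.eval_preimage, Measure.pi_pi]
  rw [Finset.prod_eq_single k (fun b _ hb => by
      rw [Function.update_of_ne hb]; exact measure_univ)
    (fun h => absurd (Finset.mem_univ k) h)]
  rw [Function.update_self]

end TgtAux


/-- **General approximation guarantee for the Target problem (multiple protected
attributes).** With `r = 1 + ∑ k (p k − 1)` and `p̄ = max_k p k`, rounding up an optimal
basic feasible solution `x` of the denoised LP gives `x'` with `n ≤ ∑ x' ≤ n + r`, and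
for every fixed binary `x*` of cardinality `n`, with probability at least
`1 − 4 p̄ s exp (−δ² n / 3)` over the random assignments `g`: (i) if `x*` satisfies the
Target fairness constraints for `g`, then `x'` has value at least that of `x*`; and
(ii) `x'` violates each Target fairness constraint by at most `r + 2 δ n`. -/
theorem stmt10 (m n s : ℕ) (hm : 0 < m) (hn : 0 < n) (hs : 0 < s)
    (p : Fin s → ℕ) (hp : ∀ k, 0 < p k)
    (δ : ℝ) (hδ : δ ∈ Set.Ioo (0 : ℝ) 1)
    (w : Fin m → ℝ) (hw : ∀ i, 0 ≤ w i)
    (L U : ∀ k : Fin s, Fin (p k) → ℝ)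
    (hL : ∀ k ℓ, 0 ≤ L k ℓ) (hU : ∀ k ℓ, 0 ≤ U k ℓ)
    (q : ∀ k : Fin s, Fin m → Fin (p k) → ℝ)
    (hq : ∀ k i ℓ, q k i ℓ ∈ Set.Icc (0 : ℝ) 1)
    (hqsum : ∀ k i, ∑ ℓ, q k i ℓ = 1)
    (ν : ∀ k : Fin s, Fin m → Measure (Fin (p k)))
    [∀ k i, IsProbabilityMeasure (ν k i)]
    (hνq : ∀ k i ℓ, ν k i {ℓ} = ENNReal.ofReal (q k i ℓ))
    (r : ℕ) (hr : r = 1 + ∑ k, (p k - 1))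
    (P : Set (Fin m → ℝ))
    (hP : P = {x | (∀ i, 0 ≤ x i ∧ x i ≤ 1) ∧ (∑ i, x i = (n : ℝ)) ∧
      ∀ (k : Fin s) (ℓ : Fin (p k)),
        L k ℓ - δ * n ≤ ∑ i, q k i ℓ * x i ∧ ∑ i, q k i ℓ * x i ≤ U k ℓ + δ * n})
    (x : Fin m → ℝ) (hxP : x ∈ P)
    (hxopt : ∀ y ∈ P, ∑ i, w i * y i ≤ ∑ i, w i * x i)
    (hfrac : {i | 0 < x i ∧ x i < 1}.ncard ≤ r)
    (x' : Fin m → ℝ) (hx' : ∀ i, x' i = (⌈x i⌉ : ℝ))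
    (xstar : Fin m → ℝ) (hxstar01 : ∀ i, xstar i = 0 ∨ xstar i = 1)
    (hxstarsum : ∑ i, xstar i = (n : ℝ)) :
    ((n : ℝ) ≤ ∑ i, x' i ∧ ∑ i, x' i ≤ (n : ℝ) + r) ∧
    ENNReal.ofReal (1 - 4 * (Finset.univ.sup p) * s * Real.exp (-(δ ^ 2 * n) / 3)) ≤
      Measure.pi (fun k => Measure.pi (fun i => ν k i)) {g |
        ((∀ (k : Fin s) (ℓ : Fin (p k)),
            L k ℓ ≤ (({i | xstar i = 1 ∧ g k i = ℓ} : Set (Fin m)).ncard : ℝ) ∧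
            (({i | xstar i = 1 ∧ g k i = ℓ} : Set (Fin m)).ncard : ℝ) ≤ U k ℓ) →
          ∑ i, w i * xstar i ≤ ∑ i, w i * x' i) ∧
        (∀ (k : Fin s) (ℓ : Fin (p k)),
          L k ℓ - ((r : ℝ) + 2 * δ * n) ≤
            (({i | x' i = 1 ∧ g k i = ℓ} : Set (Fin m)).ncard : ℝ) ∧
          (({i | x' i = 1 ∧ g k i = ℓ} : Set (Fin m)).ncard : ℝ) ≤
            U k ℓ + ((r : ℝ) + 2 * δ * n))} := by
  classical
  haveI hPM1 : ∀ k : Fin s, IsProbabilityMeasure (Measure.pi (fun i => ν k i)) :=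
    fun k => MeasureTheory.Measure.pi.instIsProbabilityMeasure _
  haveI hPM2 : IsProbabilityMeasure (Measure.pi (fun k => Measure.pi (fun i => ν k i))) :=
    MeasureTheory.Measure.pi.instIsProbabilityMeasure _
  obtain ⟨hδ0, hδ1⟩ := hδ
  subst hP
  obtain ⟨hx01, hxsum, hxcon⟩ := hxP
  -- basic facts about x'
  have hxle : ∀ i, x i ≤ x' i := fun i => (hx' i) ▸ Int.le_ceil (x i)
  have hx'pos : ∀ i, 0 < x i → x' i = 1 := by
    intro i h
    have h1 : (1:ℤ) ≤ ⌈x i⌉ := Int.ceil_pos.2 h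
    have h2 : ⌈x i⌉ ≤ (1:ℤ) := Int.ceil_le.2 (by exact_mod_cast (hx01 i).2)
    rw [hx' i]
    have : ⌈x i⌉ = 1 := le_antisymm h2 h1
    rw [this]; norm_num
  have hx'zero : ∀ i, x i = 0 → x' i = 0 := by
    intro i h
    rw [hx' i, h, Int.ceil_zero]; norm_num
  have hx'mem : ∀ i, x' i = 0 ∨ x' i = 1 := by
    intro i
    rcases eq_or_lt_of_le (hx01 i).1 with h|h
    · exact Or.inl (hx'zero i h.symm)
    · exact Or.inr (hx'pos i h)
  -- the fractional-coordinate finset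
  set F : Finset (Fin m) := Finset.univ.filter (fun i => 0 < x i ∧ x i < 1) with hF_def
  have hFr : F.card ≤ r := by
    have he : {i | 0 < x i ∧ x i < 1}.ncard = F.card := by
      rw [Set.ncard_eq_toFinset_card']
      congr 1
      ext i
      simp [hF_def]
    omega
  have hFrR : (F.card : ℝ) ≤ (r : ℝ) := by exact_mod_cast hFr
  -- Part A
  have hA1 : (n:ℝ) ≤ ∑ i, x' i := by
    rw [← hxsum]; exact Finset.sum_le_sum fun i _ => hxle i
  have hdiff : ∀ i, x' i - x i ≤ (if i ∈ F then (1:ℝ) else 0) := by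
    intro i
    by_cases hiF : i ∈ F
    · simp only [hiF, if_true]
      rcases hx'mem i with h|h <;> rw [h] <;> linarith [(hx01 i).1]
    · simp only [hiF, if_false]
      have hnot : ¬(0 < x i ∧ x i < 1) := by
        intro hc; exact hiF (by simp [hF_def, hc])
      rcases eq_or_lt_of_le (hx01 i).1 with h0|h0
      · rw [hx'zero i h0.symm, ← h0]; norm_num
      · have hx1 : x i = 1 := by
          rcases eq_or_lt_of_le (hx01 i).2 with h1|h1
          · exact h1
          · exact absurd ⟨h0, h1⟩ hnot
        rw [hx'pos i h0, hx1]; norm_num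
  have hA2 : ∑ i, x' i ≤ (n:ℝ) + r := by
    have h1 : ∑ i, (x' i - x i) ≤ ∑ i, (if i ∈ F then (1:ℝ) else 0) :=
      Finset.sum_le_sum fun i _ => hdiff i
    have h2 : ∑ i, (if i ∈ F then (1:ℝ) else 0) = F.card := by
      rw [Finset.sum_ite_mem, Finset.univ_inter, Finset.sum_const]; simp
    have h4 : ∑ i, (x' i - x i) = ∑ i, x' i - ∑ i, x i := Finset.sum_sub_distrib _ _
    rw [h2] at h1
    rw [h4, hxsum] at h1
    linarith
  refine ⟨⟨hA1, hA2⟩, ?_⟩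
  -- the selection finsets
  set Sstar : Finset (Fin m) := Finset.univ.filter (fun i => xstar i = 1) with hSstar_def
  set S1 : Finset (Fin m) := Finset.univ.filter (fun i => x i = 1) with hS1_def
  set S' : Finset (Fin m) := Finset.univ.filter (fun i => x' i = 1) with hS'_def
  have hSstar_cardR : (Sstar.card : ℝ) = (n : ℝ) := by
    rw [← hxstarsum]
    rw [show ∑ i, xstar i = ∑ i, (if xstar i = 1 then (1:ℝ) else 0) from
      Finset.sum_congr rfl fun i _ => by rcases hxstar01 i with h|h <;> simp [h]]
    rw [Finset.sum_boole]
  have hSstar_card : Sstar.card ≤ n := by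
    have : (Sstar.card : ℝ) ≤ (n : ℝ) := le_of_eq hSstar_cardR
    exact_mod_cast this
  have hS1_card : S1.card ≤ n := by
    have h1 : ∑ i ∈ S1, x i = (S1.card : ℝ) := by
      rw [show ∑ i ∈ S1, x i = ∑ _i ∈ S1, (1:ℝ) from
        Finset.sum_congr rfl fun i hi => (Finset.mem_filter.1 hi).2]
      simp
    have h2 : ∑ i ∈ S1, x i ≤ ∑ i, x i :=
      Finset.sum_le_sum_of_subset_of_nonneg (Finset.subset_univ _)
        (fun i _ _ => (hx01 i).1)
    rw [hxsum] at h2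
    have : (S1.card : ℝ) ≤ (n:ℝ) := by rw [← h1]; linarith
    exact_mod_cast this
  have hS1S' : S1 ⊆ S' := by
    intro i hi
    have h2 : x i = 1 := (Finset.mem_filter.1 hi).2
    exact Finset.mem_filter.2 ⟨Finset.mem_univ i, hx'pos i (by rw [h2]; norm_num)⟩
  have hS'F : S' \ S1 ⊆ F := by
    intro i hi
    have hi1 : x' i = 1 := (Finset.mem_filter.1 (Finset.mem_sdiff.1 hi).1).2
    have hi2 := (Finset.mem_sdiff.1 hi).2
    have hne1 : x i ≠ 1 := fun hc => hi2 (Finset.mem_filter.2 ⟨Finset.mem_univ i, hc⟩)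
    have hpos : 0 < x i := by
      by_contra hc
      push_neg at hc
      have h0 : x i = 0 := le_antisymm hc (hx01 i).1
      rw [hx'zero i h0] at hi1
      norm_num at hi1
    exact Finset.mem_filter.2 ⟨Finset.mem_univ i, hpos, lt_of_le_of_ne (hx01 i).2 hne1⟩
  -- counting functions
  set cnt : Finset (Fin m) → ∀ k : Fin s, Fin (p k) → (∀ k, Fin m → Fin (p k)) → ℝ :=
    fun S k ℓ g => ∑ i ∈ S, if g k i = ℓ then 1 else 0 with hcnt_def
  set mea : Finset (Fin m) → ∀ k : Fin s, Fin (p k) → ℝ :=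
    fun S k ℓ => ∑ i ∈ S, q k i ℓ with hmea_def
  have hcnt_tr : ∀ (v : Fin m → ℝ) (k : Fin s) (ℓ : Fin (p k)) g,
      (({i | v i = 1 ∧ g k i = ℓ} : Set (Fin m)).ncard : ℝ)
      = cnt (Finset.univ.filter (fun i => v i = 1)) k ℓ g := by
    intro v k ℓ g
    have h1 : ({i | v i = 1 ∧ g k i = ℓ} : Set (Fin m)).ncard
        = (Finset.univ.filter (fun i => v i = 1 ∧ g k i = ℓ)).card := by
      rw [Set.ncard_eq_toFinset_card']
      congr 1
      ext i
      simp
    rw [h1]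
    rw [show cnt (Finset.univ.filter fun i => v i = 1) k ℓ g
        = ∑ i ∈ Finset.univ.filter (fun i => v i = 1), (if g k i = ℓ then (1:ℝ) else 0) from rfl]
    rw [Finset.sum_boole, Finset.filter_filter]
  -- the good event
  set E : Set (∀ k, Fin m → Fin (p k)) := {g | ∀ (k : Fin s) (ℓ : Fin (p k)),
      |cnt Sstar k ℓ g - mea Sstar k ℓ| ≤ δ*n ∧ |cnt S1 k ℓ g - mea S1 k ℓ| ≤ δ*n} with hE_def
  -- step 1 : E is contained in the target event
  have hstep1 : E ⊆ {g : ∀ k, Fin m → Fin (p k) |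
      ((∀ (k : Fin s) (ℓ : Fin (p k)),
          L k ℓ ≤ (({i | xstar i = 1 ∧ g k i = ℓ} : Set (Fin m)).ncard : ℝ) ∧
          (({i | xstar i = 1 ∧ g k i = ℓ} : Set (Fin m)).ncard : ℝ) ≤ U k ℓ) →
        ∑ i, w i * xstar i ≤ ∑ i, w i * x' i) ∧
      (∀ (k : Fin s) (ℓ : Fin (p k)),
        L k ℓ - ((r : ℝ) + 2 * δ * n) ≤
          (({i | x' i = 1 ∧ g k i = ℓ} : Set (Fin m)).ncard : ℝ) ∧
        (({i | x' i = 1 ∧ g k i = ℓ} : Set (Fin m)).ncard : ℝ) ≤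
          U k ℓ + ((r : ℝ) + 2 * δ * n))} := by
    intro g hg
    have hgE : ∀ (k : Fin s) (ℓ : Fin (p k)),
        |cnt Sstar k ℓ g - mea Sstar k ℓ| ≤ δ*n ∧ |cnt S1 k ℓ g - mea S1 k ℓ| ≤ δ*n := hg
    have hcnt_star : ∀ (k : Fin s) (ℓ : Fin (p k)),
        (({i | xstar i = 1 ∧ g k i = ℓ} : Set (Fin m)).ncard : ℝ) = cnt Sstar k ℓ g :=
      fun k ℓ => hcnt_tr xstar k ℓ g
    have hcnt_x' : ∀ (k : Fin s) (ℓ : Fin (p k)),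
        (({i | x' i = 1 ∧ g k i = ℓ} : Set (Fin m)).ncard : ℝ) = cnt S' k ℓ g :=
      fun k ℓ => hcnt_tr x' k ℓ g
    have hval : ∀ (k : Fin s) (ℓ : Fin (p k)), ∑ i, q k i ℓ * xstar i = mea Sstar k ℓ := by
      intro k ℓ
      rw [show mea Sstar k ℓ = ∑ i ∈ Finset.univ.filter (fun i => xstar i = 1), q k i ℓ from rfl]
      rw [Finset.sum_filter]
      exact Finset.sum_congr rfl fun i _ => by rcases hxstar01 i with h|h <;> simp [h]
    constructor
    · -- value guarantee
      intro hyp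
      have hxstarP : xstar ∈ {y : Fin m → ℝ | (∀ i, 0 ≤ y i ∧ y i ≤ 1) ∧
          (∑ i, y i = (n : ℝ)) ∧ ∀ (k : Fin s) (ℓ : Fin (p k)),
            L k ℓ - δ * n ≤ ∑ i, q k i ℓ * y i ∧ ∑ i, q k i ℓ * y i ≤ U k ℓ + δ * n} := by
        refine ⟨fun i => by rcases hxstar01 i with h|h <;> rw [h] <;> norm_num,
          hxstarsum, fun k ℓ => ?_⟩
        obtain ⟨ha, hb⟩ := abs_le.1 (hgE k ℓ).1
        obtain ⟨hLb, hUb⟩ := hyp k ℓ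
        rw [hcnt_star k ℓ] at hLb hUb
        rw [hval k ℓ]
        constructor <;> linarith
      calc ∑ i, w i * xstar i ≤ ∑ i, w i * x i := hxopt xstar hxstarP
        _ ≤ ∑ i, w i * x' i :=
          Finset.sum_le_sum fun i _ => mul_le_mul_of_nonneg_left (hxle i) (hw i)
    · -- fairness violation bound
      intro k ℓ
      obtain ⟨e3a, e3b⟩ := abs_le.1 (hgE k ℓ).2
      have e1 : cnt S1 k ℓ g ≤ cnt S' k ℓ g :=
        Finset.sum_le_sum_of_subset_of_nonneg hS1S'
          (fun i _ _ => by split <;> norm_num)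
      have e2 : cnt S' k ℓ g ≤ cnt S1 k ℓ g + r := by
        have hsd : cnt (S' \ S1) k ℓ g + cnt S1 k ℓ g = cnt S' k ℓ g :=
          Finset.sum_sdiff hS1S'
        have hb : cnt (S' \ S1) k ℓ g ≤ ((S' \ S1).card : ℝ) := by
          calc cnt (S' \ S1) k ℓ g ≤ ∑ _i ∈ S' \ S1, (1:ℝ) :=
              Finset.sum_le_sum fun i _ => by split <;> norm_num
            _ = ((S' \ S1).card : ℝ) := by simp
        have hb2 : ((S' \ S1).card : ℝ) ≤ (r : ℝ) := by
          have h5 := Finset.card_le_card hS'F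
          exact_mod_cast le_trans h5 hFr
        linarith
      have hS1x : mea S1 k ℓ = ∑ i ∈ S1, q k i ℓ * x i :=
        Finset.sum_congr rfl fun i hi => by
          rw [(Finset.mem_filter.1 hi).2, mul_one]
      have e4 : mea S1 k ℓ ≤ ∑ i, q k i ℓ * x i := by
        rw [hS1x]
        exact Finset.sum_le_sum_of_subset_of_nonneg (Finset.subset_univ _)
          fun i _ _ => mul_nonneg (hq k i ℓ).1 (hx01 i).1
      have e5 : ∑ i, q k i ℓ * x i ≤ mea S1 k ℓ + r := by
        have hsplit : ∑ i ∈ Finset.univ \ S1, q k i ℓ * x i + ∑ i ∈ S1, q k i ℓ * x i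
            = ∑ i, q k i ℓ * x i := Finset.sum_sdiff (Finset.subset_univ S1)
        have hrest : ∑ i ∈ Finset.univ \ S1, q k i ℓ * x i ≤ (F.card : ℝ) := by
          have hterm : ∀ i ∈ Finset.univ \ S1, q k i ℓ * x i ≤ (if i ∈ F then (1:ℝ) else 0) := by
            intro i hi
            have hne1 : x i ≠ 1 := fun hc =>
              (Finset.mem_sdiff.1 hi).2 (Finset.mem_filter.2 ⟨Finset.mem_univ i, hc⟩)
            by_cases hiF : i ∈ F
            · simp only [hiF, if_true]
              nlinarith [(hq k i ℓ).1, (hq k i ℓ).2, (hx01 i).1, (hx01 i).2]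
            · simp only [hiF, if_false]
              have hnot : ¬(0 < x i ∧ x i < 1) := fun hc =>
                hiF (Finset.mem_filter.2 ⟨Finset.mem_univ i, hc⟩)
              have hx0 : x i = 0 := by
                rcases eq_or_lt_of_le (hx01 i).1 with h0|h0
                · exact h0.symm
                · exact absurd ⟨h0, lt_of_le_of_ne (hx01 i).2 hne1⟩ hnot
              rw [hx0, mul_zero]
          calc ∑ i ∈ Finset.univ \ S1, q k i ℓ * x i
              ≤ ∑ i ∈ Finset.univ \ S1, (if i ∈ F then (1:ℝ) else 0) :=
                Finset.sum_le_sum hterm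
            _ ≤ ∑ i, (if i ∈ F then (1:ℝ) else 0) :=
                Finset.sum_le_sum_of_subset_of_nonneg (Finset.sdiff_subset)
                  (fun i _ _ => by split <;> norm_num)
            _ = (F.card : ℝ) := by
                rw [Finset.sum_ite_mem, Finset.univ_inter, Finset.sum_const]; simp
        linarith
      obtain ⟨e6, e7⟩ := hxcon k ℓ
      rw [hcnt_x' k ℓ]
      constructor <;> linarith
  refine le_trans ?_ (measure_mono hstep1)
  -- step 2 : probability bound
  set e0 : ℝ≥0∞ := ENNReal.ofReal (Real.exp (-(δ^2*n)/3)) with he0_def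
  have hup : ∀ (S : Finset (Fin m)), S.card ≤ n → ∀ (k : Fin s) (ℓ : Fin (p k)),
      Measure.pi (fun k => Measure.pi (fun i => ν k i))
        {g : ∀ k, Fin m → Fin (p k) | mea S k ℓ + δ*n ≤ cnt S k ℓ g} ≤ e0 := by
    intro S hS k ℓ
    have heq : {g : ∀ k, Fin m → Fin (p k) | mea S k ℓ + δ*n ≤ cnt S k ℓ g}
        = Function.eval k ⁻¹' {y : Fin m → Fin (p k) |
            (∑ i ∈ S, q k i ℓ) + δ*n ≤ ∑ i ∈ S, (if y i = ℓ then (1:ℝ) else 0)} := rfl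
    rw [heq, tgt_eval]
    exact tgt_upper ⟨hδ0, hδ1⟩ (fun i => ν k i) (q k) (hq k) (hqsum k) (hνq k) S hS ℓ
  have hlow : ∀ (S : Finset (Fin m)), S.card ≤ n → ∀ (k : Fin s) (ℓ : Fin (p k)),
      Measure.pi (fun k => Measure.pi (fun i => ν k i))
        {g : ∀ k, Fin m → Fin (p k) | cnt S k ℓ g ≤ mea S k ℓ - δ*n} ≤ e0 := by
    intro S hS k ℓ
    have heq : {g : ∀ k, Fin m → Fin (p k) | cnt S k ℓ g ≤ mea S k ℓ - δ*n}
        = Function.eval k ⁻¹' {y : Fin m → Fin (p k) |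
            ∑ i ∈ S, (if y i = ℓ then (1:ℝ) else 0) ≤ (∑ i ∈ S, q k i ℓ) - δ*n} := rfl
    rw [heq, tgt_eval]
    exact tgt_lower ⟨hδ0, hδ1⟩ (fun i => ν k i) (q k) (hq k) (hqsum k) (hνq k) S hS ℓ
  set Bad : Set (∀ k, Fin m → Fin (p k)) := ⋃ k, ⋃ ℓ,
      ({g : ∀ k, Fin m → Fin (p k) | mea Sstar k ℓ + δ*n ≤ cnt Sstar k ℓ g}
        ∪ {g : ∀ k, Fin m → Fin (p k) | cnt Sstar k ℓ g ≤ mea Sstar k ℓ - δ*n}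
        ∪ ({g : ∀ k, Fin m → Fin (p k) | mea S1 k ℓ + δ*n ≤ cnt S1 k ℓ g}
          ∪ {g : ∀ k, Fin m → Fin (p k) | cnt S1 k ℓ g ≤ mea S1 k ℓ - δ*n})) with hBad_def
  have hEc : Eᶜ ⊆ Bad := by
    intro g hg
    have hg2 : ¬ ∀ (k : Fin s) (ℓ : Fin (p k)),
        |cnt Sstar k ℓ g - mea Sstar k ℓ| ≤ δ*n ∧ |cnt S1 k ℓ g - mea S1 k ℓ| ≤ δ*n := hg
    rcases not_forall.1 hg2 with ⟨k, hk⟩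
    rcases not_forall.1 hk with ⟨ℓ, hkl⟩
    refine Set.mem_iUnion.2 ⟨k, Set.mem_iUnion.2 ⟨ℓ, ?_⟩⟩
    rcases not_and_or.1 hkl with h|h
    · rcases lt_abs.1 (not_le.1 h) with h'|h'
      · exact Or.inl (Or.inl (le_of_lt (by linarith : mea Sstar k ℓ + δ*n < cnt Sstar k ℓ g)))
      · exact Or.inl (Or.inr (le_of_lt (by linarith : cnt Sstar k ℓ g < mea Sstar k ℓ - δ*n)))
    · rcases lt_abs.1 (not_le.1 h) with h'|h'
      · exact Or.inr (Or.inl (le_of_lt (by linarith : mea S1 k ℓ + δ*n < cnt S1 k ℓ g)))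
      · exact Or.inr (Or.inr (le_of_lt (by linarith : cnt S1 k ℓ g < mea S1 k ℓ - δ*n)))
  have hBadle : Measure.pi (fun k => Measure.pi (fun i => ν k i)) Bad
      ≤ (s : ℝ≥0∞) * (((Finset.univ.sup p : ℕ) : ℝ≥0∞) * (4 * e0)) := by
    calc Measure.pi (fun k => Measure.pi (fun i => ν k i)) Bad
        ≤ ∑ k : Fin s, Measure.pi (fun k => Measure.pi (fun i => ν k i)) (⋃ ℓ,
          ({g : ∀ k, Fin m → Fin (p k) | mea Sstar k ℓ + δ*n ≤ cnt Sstar k ℓ g}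
            ∪ {g : ∀ k, Fin m → Fin (p k) | cnt Sstar k ℓ g ≤ mea Sstar k ℓ - δ*n}
            ∪ ({g : ∀ k, Fin m → Fin (p k) | mea S1 k ℓ + δ*n ≤ cnt S1 k ℓ g}
              ∪ {g : ∀ k, Fin m → Fin (p k) | cnt S1 k ℓ g ≤ mea S1 k ℓ - δ*n}))) :=
          measure_iUnion_fintype_le _ _
      _ ≤ ∑ k : Fin s, ((p k : ℝ≥0∞) * (4 * e0)) := by
          refine Finset.sum_le_sum fun k _ => ?_
          calc Measure.pi (fun k => Measure.pi (fun i => ν k i)) (⋃ ℓ, _)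
              ≤ ∑ ℓ : Fin (p k), Measure.pi (fun k => Measure.pi (fun i => ν k i))
                (({g : ∀ k, Fin m → Fin (p k) | mea Sstar k ℓ + δ*n ≤ cnt Sstar k ℓ g}
                  ∪ {g : ∀ k, Fin m → Fin (p k) | cnt Sstar k ℓ g ≤ mea Sstar k ℓ - δ*n}
                  ∪ ({g : ∀ k, Fin m → Fin (p k) | mea S1 k ℓ + δ*n ≤ cnt S1 k ℓ g}
                    ∪ {g : ∀ k, Fin m → Fin (p k) | cnt S1 k ℓ g ≤ mea S1 k ℓ - δ*n}))) :=
                measure_iUnion_fintype_le _ _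
            _ ≤ ∑ _ℓ : Fin (p k), (4 * e0) := by
                refine Finset.sum_le_sum fun ℓ _ => ?_
                calc Measure.pi (fun k => Measure.pi (fun i => ν k i)) _
                    ≤ Measure.pi (fun k => Measure.pi (fun i => ν k i))
                        ({g : ∀ k, Fin m → Fin (p k) | mea Sstar k ℓ + δ*n ≤ cnt Sstar k ℓ g}
                          ∪ {g : ∀ k, Fin m → Fin (p k) | cnt Sstar k ℓ g ≤ mea Sstar k ℓ - δ*n})
                      + Measure.pi (fun k => Measure.pi (fun i => ν k i))
                        ({g : ∀ k, Fin m → Fin (p k) | mea S1 k ℓ + δ*n ≤ cnt S1 k ℓ g}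
                          ∪ {g : ∀ k, Fin m → Fin (p k) | cnt S1 k ℓ g ≤ mea S1 k ℓ - δ*n}) :=
                      measure_union_le _ _
                  _ ≤ (e0 + e0) + (e0 + e0) := by
                      refine add_le_add (le_trans (measure_union_le _ _) ?_)
                        (le_trans (measure_union_le _ _) ?_)
                      · exact add_le_add (hup Sstar hSstar_card k ℓ) (hlow Sstar hSstar_card k ℓ)
                      · exact add_le_add (hup S1 hS1_card k ℓ) (hlow S1 hS1_card k ℓ)
                  _ = 4 * e0 := by ring
            _ = (p k : ℝ≥0∞) * (4 * e0) := by
                rw [Finset.sum_const, Finset.card_univ, Fintype.card_fin, nsmul_eq_mul]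
      _ ≤ ∑ _k : Fin s, (((Finset.univ.sup p : ℕ) : ℝ≥0∞) * (4 * e0)) := by
          refine Finset.sum_le_sum fun k _ => ?_
          exact mul_le_mul_left (Nat.cast_le.2 (Finset.le_sup (Finset.mem_univ k))) _
      _ = (s : ℝ≥0∞) * (((Finset.univ.sup p : ℕ) : ℝ≥0∞) * (4 * e0)) := by
          rw [Finset.sum_const, Finset.card_univ, Fintype.card_fin, nsmul_eq_mul]
  have hone : (1:ℝ≥0∞) ≤ Measure.pi (fun k => Measure.pi (fun i => ν k i)) E
      + Measure.pi (fun k => Measure.pi (fun i => ν k i)) Eᶜ := by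
    have h := measure_union_le (μ := Measure.pi (fun k => Measure.pi (fun i => ν k i))) E Eᶜ
    rwa [Set.union_compl_self, measure_univ] at h
  have hBR : (0:ℝ) ≤ 4 * ((Finset.univ.sup p : ℕ) : ℝ) * (s : ℝ) * Real.exp (-(δ ^ 2 * n) / 3) := by
    positivity
  have hcalc : ENNReal.ofReal (4 * ((Finset.univ.sup p : ℕ) : ℝ) * (s : ℝ) * Real.exp (-(δ ^ 2 * n) / 3))
      = (s : ℝ≥0∞) * (((Finset.univ.sup p : ℕ) : ℝ≥0∞) * (4 * e0)) := by
    rw [he0_def]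
    rw [ENNReal.ofReal_mul (by positivity), ENNReal.ofReal_mul (by positivity),
      ENNReal.ofReal_mul (by norm_num)]
    rw [ENNReal.ofReal_natCast, ENNReal.ofReal_natCast]
    rw [show ENNReal.ofReal (4:ℝ) = (4:ℝ≥0∞) by
      rw [show (4:ℝ) = ((4:ℕ):ℝ) by norm_num, ENNReal.ofReal_natCast]; norm_num]
    ring
  have hEcle : Measure.pi (fun k => Measure.pi (fun i => ν k i)) Eᶜ
      ≤ ENNReal.ofReal (4 * ((Finset.univ.sup p : ℕ) : ℝ) * (s : ℝ) * Real.exp (-(δ ^ 2 * n) / 3)) := by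
    rw [hcalc]
    exact le_trans (measure_mono hEc) hBadle
  calc ENNReal.ofReal (1 - 4 * ((Finset.univ.sup p : ℕ) : ℝ) * (s : ℝ) * Real.exp (-(δ ^ 2 * n) / 3))
      = 1 - ENNReal.ofReal (4 * ((Finset.univ.sup p : ℕ) : ℝ) * (s : ℝ) * Real.exp (-(δ ^ 2 * n) / 3)) := by
        rw [ENNReal.ofReal_sub _ hBR, ENNReal.ofReal_one]
    _ ≤ 1 - Measure.pi (fun k => Measure.pi (fun i => ν k i)) Eᶜ := tsub_le_tsub_left hEcle 1
    _ ≤ Measure.pi (fun k => Measure.pi (fun i => ν k i)) E := tsub_le_iff_right.2 hone
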